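/- arXiv:1807.06282 — 2 statements merged into one kernel-verified Lean document; each statement's English description precedes it below -/
import Mathlib

section
/- Let P be a compact Hausdorff topological semigroup with jointly continuous multiplication. If the left cancellation law fails (i.e. there exist s, t, r in P with s·t = s·r but t ≠ r), then the set {(x,y) ↦ f(x)·g(x·y) : f, g ∈ C(P)} does not have dense linear span in C(P × P) with the uniform norm. -/
/-- if left cancellation fails in a compact topological semigroup
`P`, then the span of `{(x,y) ↦ f x * g (x*y)}` is not dense in `C(P × P)`. -/
theorem cancellation_fails_implies_not_dense
    {P : Type*} [TopologicalSpace P] [CompactSpace P] [T2Space P]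
    [Semigroup P] [ContinuousMul P]
    (h : ∃ s t r : P, s * t = s * r ∧ t ≠ r) :
    ¬ Dense (↑(Submodule.span ℂ
      {F : C(P × P, ℂ) | ∃ f g : C(P, ℂ), ∀ p : P × P, F p = f p.1 * g (p.1 * p.2)}) :
      Set C(P × P, ℂ)) := by
  obtain ⟨s, t, r, hst, htr⟩ := h
  intro hd
  set φ : C(P × P, ℂ) →L[ℂ] ℂ :=
    ContinuousMap.evalCLM ℂ (s, t) - ContinuousMap.evalCLM ℂ (s, r) with hφ
  have hspan : Submodule.span ℂ
      {F : C(P × P, ℂ) | ∃ f g : C(P, ℂ), ∀ p : P × P, F p = f p.1 * g (p.1 * p.2)}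
      ≤ LinearMap.ker (φ : C(P × P, ℂ) →ₗ[ℂ] ℂ) := by
    rw [Submodule.span_le]
    rintro F ⟨f, g, hF⟩
    simp only [SetLike.mem_coe, LinearMap.mem_ker, hφ, ContinuousLinearMap.coe_sub',
      Pi.sub_apply, ContinuousLinearMap.coe_coe]
    have h1 := hF (s, t)
    have h2 := hF (s, r)
    show F (s, t) - F (s, r) = 0
    rw [h1, h2, hst, sub_self]
  -- the kernel of φ is closed, so the closure of the span is contained in it
  have hclosed : IsClosed ((φ : C(P × P, ℂ) → ℂ) ⁻¹' {0}) :=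
    isClosed_singleton.preimage φ.continuous
  have hall : ∀ F : C(P × P, ℂ), φ F = 0 := by
    intro F
    have : F ∈ closure (↑(Submodule.span ℂ
      {F : C(P × P, ℂ) | ∃ f g : C(P, ℂ), ∀ p : P × P, F p = f p.1 * g (p.1 * p.2)}) :
      Set C(P × P, ℂ)) := by rw [hd.closure_eq]; trivial
    have hsub : closure (↑(Submodule.span ℂ
        {F : C(P × P, ℂ) | ∃ f g : C(P, ℂ), ∀ p : P × P, F p = f p.1 * g (p.1 * p.2)}) :
        Set C(P × P, ℂ)) ⊆ (φ : C(P × P, ℂ) → ℂ) ⁻¹' {0} := by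
      apply closure_minimal _ hclosed
      intro G hG
      exact hspan hG
    exact hsub this
  -- construct a function separating (s,t) and (s,r)
  have hne : ((s, t) : P × P) ≠ (s, r) := by
    intro hc
    exact htr (congrArg Prod.snd hc)
  obtain ⟨u, hu0, hu1, -⟩ := exists_continuous_zero_one_of_isClosed
    (isClosed_singleton (x := ((s, t) : P × P)))
    (isClosed_singleton (x := ((s, r) : P × P)))
    (by simpa [Set.disjoint_singleton] using hne)
  set F : C(P × P, ℂ) :=
    (⟨Complex.ofReal, Complex.continuous_ofReal⟩ : C(ℝ, ℂ)).comp u with hF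
  have h0 : F (s, t) = 0 := by
    simp [hF, hu0 (Set.mem_singleton _)]
  have h1 : F (s, r) = 1 := by
    simp [hF, hu1 (Set.mem_singleton _)]
  have h2 : F (s, t) - F (s, r) = 0 := hall F
  rw [h0, h1] at h2
  norm_num at h2
end

section
/- Let P be a compact Hausdorff topological semigroup with jointly continuous multiplication satisfying the left cancellation law (s·t = s·r implies t = r). Then the *-subalgebra generated by functions of the form (x,y) ↦ f(x)·g(x·y), for f, g ∈ C(P), separates points of P × P, and hence its closed linear span is dense in C(P × P). -/
lemma exists_sep {P : Type*} [TopologicalSpace P] [CompactSpace P] [T2Space P]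
    {a b : P} (hab : a ≠ b) : ∃ f : C(P, ℂ), f a ≠ f b := by
  obtain ⟨f, hf0, hf1, -⟩ := exists_continuous_zero_one_of_isClosed
    (isClosed_singleton (x := a)) (isClosed_singleton (x := b))
    (Set.disjoint_singleton.mpr hab)
  refine ⟨⟨fun x => (f x : ℂ), by fun_prop⟩, ?_⟩
  simp only [ContinuousMap.coe_mk]
  rw [hf0 rfl, hf1 rfl]
  norm_num

/-- if a compact topological semigroup `P` satisfies left
cancellation, then the *-subalgebra of `C(P × P)` generated by the functions
`(x,y) ↦ f x * g (x*y)` separates points and is dense. -/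
theorem cancellation_implies_separates_and_dense
    {P : Type*} [TopologicalSpace P] [CompactSpace P] [T2Space P]
    [Semigroup P] [ContinuousMul P]
    (hcancel : ∀ s t r : P, s * t = s * r → t = r) :
    (∀ p q : P × P, p ≠ q →
      ∃ F ∈ StarAlgebra.adjoin ℂ
        {F : C(P × P, ℂ) | ∃ f g : C(P, ℂ), ∀ p : P × P, F p = f p.1 * g (p.1 * p.2)},
        F p ≠ F q) ∧
    Dense (↑(StarAlgebra.adjoin ℂ
      {F : C(P × P, ℂ) | ∃ f g : C(P, ℂ), ∀ p : P × P, F p = f p.1 * g (p.1 * p.2)}) :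
      Set C(P × P, ℂ)) := by
  set S : Set C(P × P, ℂ) :=
    {F : C(P × P, ℂ) | ∃ f g : C(P, ℂ), ∀ p : P × P, F p = f p.1 * g (p.1 * p.2)}
  have hsep : ∀ p q : P × P, p ≠ q →
      ∃ F ∈ StarAlgebra.adjoin ℂ S, F p ≠ F q := by
    intro p q hpq
    by_cases h1 : p.1 = q.1
    · have h2 : p.2 ≠ q.2 := fun h2 => hpq (Prod.ext h1 h2)
      have hm : p.1 * p.2 ≠ q.1 * q.2 := by
        rw [← h1]; exact fun h => h2 (hcancel _ _ _ h)
      obtain ⟨g, hg⟩ := exists_sep hm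
      refine ⟨⟨fun r => g (r.1 * r.2), by fun_prop⟩, ?_, by simpa using hg⟩
      exact StarAlgebra.subset_adjoin ℂ S ⟨1, g, fun r => by simp⟩
    · obtain ⟨f, hf⟩ := exists_sep h1
      refine ⟨⟨fun r => f r.1, by fun_prop⟩, ?_, by simpa using hf⟩
      exact StarAlgebra.subset_adjoin ℂ S ⟨f, 1, fun r => by simp⟩
  refine ⟨hsep, ?_⟩
  have hS : (StarAlgebra.adjoin ℂ S).SeparatesPoints := by
    intro p q hpq
    obtain ⟨F, hF, hne⟩ := hsep p q hpq
    exact ⟨F, ⟨F, hF, rfl⟩, hne⟩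
  have := ContinuousMap.starSubalgebra_topologicalClosure_eq_top_of_separatesPoints
    (𝕜 := ℂ) (StarAlgebra.adjoin ℂ S) hS
  rw [dense_iff_closure_eq, ← StarSubalgebra.topologicalClosure_coe, this]
  rfl
end
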